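/- Let X ⊂ ℝ² be the union of the graphs of f(x) = 1 + 1/x and g(x) = −1 − 1/x for x > 0, with the Euclidean metric. Then the distance function d on X × X has no positive local minimum value (the only local minimum value of d is 0), yet inf{d(p,q) : p ∈ graph(f), q ∈ graph(g)} = 2 and this infimum is not attained. Consequently, for the relation ∼_r (finite chains with consecutive distances < r), the two graphs are in distinct classes for r ≤ 2 and the same class for r > 2, so the scale 2 is a critical value of zero-dimensional persistence not lying in LocMin(d). -/

import Mathlib

/-- The distance function of `X` attains a local minimum at the pair `(x, y)`. -/
def LocMinPair {X : Type*} [MetricSpace X] (x y : X) : Prop :=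
  ∃ ε > 0, ∀ x' y' : X, dist x x' < ε → dist y y' < ε → dist x y ≤ dist x' y'

/-- `m` is a local minimum value of the distance function of `X`. -/
def IsLocMinVal (X : Type*) [MetricSpace X] (m : ℝ) : Prop :=
  ∃ a b : X, dist a b = m ∧ LocMinPair a b

noncomputable section
abbrev Epl := EuclideanSpace ℝ (Fin 2)
def pt (a b : ℝ) : Epl := !₂[a,b]

lemma dist_pt (a b c d : ℝ) :
    dist (pt a b) (pt c d) = Real.sqrt ((a-c)^2 + (b-d)^2) := by
  rw [EuclideanSpace.dist_eq]
  simp [pt, Fin.sum_univ_two, Real.dist_eq, sq_abs]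

lemma dist_pt_le (a b c d : ℝ) : dist (pt a b) (pt c d) ≤ |a-c| + |b-d| := by
  rw [dist_pt]
  have h1 : (a-c)^2 + (b-d)^2 ≤ (|a-c|+|b-d|)^2 := by
    nlinarith [abs_nonneg (a-c), abs_nonneg (b-d), sq_abs (a-c), sq_abs (b-d),
      mul_nonneg (abs_nonneg (a-c)) (abs_nonneg (b-d))]
  calc Real.sqrt ((a-c)^2 + (b-d)^2) ≤ Real.sqrt ((|a-c|+|b-d|)^2) := Real.sqrt_le_sqrt h1
    _ = |a-c|+|b-d| := Real.sqrt_sq (by positivity)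

lemma abs_le_dist_pt (a b c d : ℝ) : |b - d| ≤ dist (pt a b) (pt c d) := by
  rw [dist_pt, ← Real.sqrt_sq_eq_abs]
  exact Real.sqrt_le_sqrt (by nlinarith [sq_nonneg (a-c)])

lemma dist_pt_lt₁ (a1 b1 a2 b2 c1 d1 c2 d2 : ℝ)
    (hx : (a1-a2)^2 < (c1-c2)^2) (hy : (b1-b2)^2 ≤ (d1-d2)^2) :
    dist (pt a1 b1) (pt a2 b2) < dist (pt c1 d1) (pt c2 d2) := by
  rw [dist_pt, dist_pt]
  exact Real.sqrt_lt_sqrt (by positivity) (by linarith)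

lemma dist_pt_lt₂ (a1 b1 a2 b2 c1 d1 c2 d2 : ℝ)
    (hx : (a1-a2)^2 ≤ (c1-c2)^2) (hy : (b1-b2)^2 < (d1-d2)^2) :
    dist (pt a1 b1) (pt a2 b2) < dist (pt c1 d1) (pt c2 d2) := by
  rw [dist_pt, dist_pt]
  exact Real.sqrt_lt_sqrt (by positivity) (by linarith)

def fpt (t : ℝ) : Epl := pt t (1 + 1/t)
def gpt (t : ℝ) : Epl := pt t (-1 - 1/t)

lemma cross_gt {t u : ℝ} (ht : 0 < t) (hu : 0 < u) : 2 < dist (fpt t) (gpt u) := by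
  have h := abs_le_dist_pt t (1+1/t) u (-1-1/u)
  have ht' : 0 < 1/t := by positivity
  have hu' : 0 < 1/u := by positivity
  have h2 : |(1+1/t) - (-1-1/u)| = 2 + 1/t + 1/u := by
    rw [abs_of_pos (by linarith)]; ring
  rw [h2] at h
  calc (2:ℝ) < 2 + 1/t + 1/u := by linarith
    _ ≤ _ := h

lemma vert_dist {t : ℝ} (ht : 0 < t) : dist (fpt t) (gpt t) = 2 + 2/t := by
  rw [fpt, gpt, dist_pt]
  have h : (t-t)^2 + ((1+1/t) - (-1-1/t))^2 = (2+2/t)^2 := by ring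
  rw [h, Real.sqrt_sq (by positivity)]

lemma inv_sub_bound {t a b : ℝ} (ht : 0 < t) (h1 : t ≤ a) (h2 : a ≤ b) :
    |1/a - 1/b| ≤ (b-a)/t^2 := by
  have ha : 0 < a := ht.trans_le h1
  have hb : 0 < b := ha.trans_le h2
  have hba : 1/b ≤ 1/a := one_div_le_one_div_of_le ha h2
  rw [abs_of_nonneg (by linarith)]
  rw [div_sub_div _ _ (ne_of_gt ha) (ne_of_gt hb), div_le_div_iff₀ (by positivity) (by positivity)]
  have hab : t^2 ≤ a*b := by nlinarith
  nlinarith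

lemma fstep {t a b : ℝ} (ht : 0 < t) (h1 : t ≤ a) (h2 : a ≤ b) :
    dist (fpt a) (fpt b) ≤ (b-a)*(1+1/t^2) := by
  have h3 := dist_pt_le a (1+1/a) b (1+1/b)
  have h4 : |(1+1/a) - (1+1/b)| = |1/a - 1/b| := by rw [show (1+1/a) - (1+1/b) = 1/a - 1/b by ring]
  have h5 := inv_sub_bound ht h1 h2
  have h6 : |a - b| = b - a := by rw [abs_sub_comm, abs_of_nonneg (by linarith)]
  calc dist (fpt a) (fpt b) ≤ |a-b| + |(1+1/a)-(1+1/b)| := h3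
    _ = (b-a) + |1/a-1/b| := by rw [h4, h6]
    _ ≤ (b-a) + (b-a)/t^2 := by linarith
    _ = (b-a)*(1+1/t^2) := by ring

lemma gstep {t a b : ℝ} (ht : 0 < t) (h1 : t ≤ a) (h2 : a ≤ b) :
    dist (gpt a) (gpt b) ≤ (b-a)*(1+1/t^2) := by
  have h3 := dist_pt_le a (-1-1/a) b (-1-1/b)
  have h4 : |(-1-1/a) - (-1-1/b)| = |1/a - 1/b| := by
    rw [show (-1-1/a) - (-1-1/b) = -(1/a - 1/b) by ring, abs_neg]
  have h5 := inv_sub_bound ht h1 h2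
  have h6 : |a - b| = b - a := by rw [abs_sub_comm, abs_of_nonneg (by linarith)]
  calc dist (gpt a) (gpt b) ≤ |a-b| + |(-1-1/a)-(-1-1/b)| := h3
    _ = (b-a) + |1/a-1/b| := by rw [h4, h6]
    _ ≤ (b-a) + (b-a)/t^2 := by linarith
    _ = (b-a)*(1+1/t^2) := by ring

lemma move_f {t u ε : ℝ} (ht : 0 < t) (htu : t < u) (hε : 0 < ε) :
    ∃ t', t < t' ∧ t' < u ∧ dist (fpt t) (fpt t') < ε ∧
      dist (fpt t') (fpt u) < dist (fpt t) (fpt u) := by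
  set h := min ((u-t)/2) (ε/(2*(1+1/t^2))) with hh
  have hh0 : 0 < h := lt_min (by linarith) (by positivity)
  have hh1 : h ≤ (u-t)/2 := min_le_left _ _
  have hh2 : h ≤ ε/(2*(1+1/t^2)) := min_le_right _ _
  refine ⟨t+h, by linarith, by linarith, ?_, ?_⟩
  · have := fstep ht le_rfl (by linarith : t ≤ t+h)
    have h7 : (t+h-t)*(1+1/t^2) ≤ ε/2 := by
      have : (0:ℝ) < 1+1/t^2 := by positivity
      rw [show t+h-t = h by ring]
      calc h*(1+1/t^2) ≤ (ε/(2*(1+1/t^2)))*(1+1/t^2) := by nlinarith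
        _ = ε/2 := by field_simp
    linarith
  · have ht' : 0 < t+h := by linarith
    have h8 : 1/u ≤ 1/(t+h) := one_div_le_one_div_of_le ht' (by linarith)
    have h9 : 1/(t+h) ≤ 1/t := one_div_le_one_div_of_le ht (by linarith)
    exact dist_pt_lt₁ _ _ _ _ _ _ _ _ (by nlinarith) (by nlinarith)

lemma move_g {t u ε : ℝ} (ht : 0 < t) (htu : t < u) (hε : 0 < ε) :
    ∃ t', t < t' ∧ t' < u ∧ dist (gpt t) (gpt t') < ε ∧
      dist (gpt t') (gpt u) < dist (gpt t) (gpt u) := by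
  set h := min ((u-t)/2) (ε/(2*(1+1/t^2))) with hh
  have hh0 : 0 < h := lt_min (by linarith) (by positivity)
  have hh1 : h ≤ (u-t)/2 := min_le_left _ _
  have hh2 : h ≤ ε/(2*(1+1/t^2)) := min_le_right _ _
  refine ⟨t+h, by linarith, by linarith, ?_, ?_⟩
  · have := gstep ht le_rfl (by linarith : t ≤ t+h)
    have h7 : (t+h-t)*(1+1/t^2) ≤ ε/2 := by
      have : (0:ℝ) < 1+1/t^2 := by positivity
      rw [show t+h-t = h by ring]
      calc h*(1+1/t^2) ≤ (ε/(2*(1+1/t^2)))*(1+1/t^2) := by nlinarith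
        _ = ε/2 := by field_simp
    linarith
  · have ht' : 0 < t+h := by linarith
    have h8 : 1/u ≤ 1/(t+h) := one_div_le_one_div_of_le ht' (by linarith)
    have h9 : 1/(t+h) ≤ 1/t := one_div_le_one_div_of_le ht (by linarith)
    exact dist_pt_lt₁ _ _ _ _ _ _ _ _ (by nlinarith) (by nlinarith)

lemma move_fg {t u ε : ℝ} (ht : 0 < t) (hu : 0 < u) (hε : 0 < ε) :
    ∃ h, 0 < h ∧ dist (fpt t) (fpt (t+h)) < ε ∧ dist (gpt u) (gpt (u+h)) < ε ∧
      dist (fpt (t+h)) (gpt (u+h)) < dist (fpt t) (gpt u) := by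
  set m := min t u with hm
  have hm0 : 0 < m := lt_min ht hu
  set h := ε/(2*(1+1/m^2)) with hh
  have hh0 : 0 < h := by positivity
  have hbound : ∀ x : ℝ, m ≤ x → 0 < x → h*(1+1/x^2) < ε := by
    intro x hmx hx
    have h1 : 1/x^2 ≤ 1/m^2 := one_div_le_one_div_of_le (by positivity) (by nlinarith)
    have h2 : (0:ℝ) < 1+1/m^2 := by positivity
    have h3 : h*(1+1/m^2) = ε/2 := by rw [hh]; field_simp
    nlinarith
  refine ⟨h, hh0, ?_, ?_, ?_⟩
  · have := fstep ht le_rfl (by linarith : t ≤ t+h)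
    have := hbound t (min_le_left _ _) ht
    have : (t+h-t)*(1+1/t^2) = h*(1+1/t^2) := by ring
    nlinarith [fstep ht le_rfl (by linarith : t ≤ t+h), hbound t (min_le_left _ _) ht]
  · nlinarith [gstep hu le_rfl (by linarith : u ≤ u+h), hbound u (min_le_right _ _) hu]
  · apply dist_pt_lt₂ _ _ _ _ _ _ _ _ (le_of_eq (by ring))
    have h1 : 1/(t+h) < 1/t := one_div_lt_one_div_of_lt ht (by linarith)
    have h2 : 1/(u+h) < 1/u := one_div_lt_one_div_of_lt hu (by linarith)
    have h3 : 0 < 1/(t+h) := by positivity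
    have h4 : 0 < 1/(u+h) := by positivity
    nlinarith

def Fs : Set Epl := {p | ∃ t : ℝ, 0 < t ∧ p = !₂[t, 1 + 1 / t]}
def Gs : Set Epl := {p | ∃ t : ℝ, 0 < t ∧ p = !₂[t, -1 - 1 / t]}
def Xs : Set Epl := Fs ∪ Gs

lemma fpt_mem {t : ℝ} (ht : 0 < t) : fpt t ∈ Xs := Or.inl ⟨t, ht, rfl⟩
lemma gpt_mem {t : ℝ} (ht : 0 < t) : gpt t ∈ Xs := Or.inr ⟨t, ht, rfl⟩

def xf (t : ℝ) (ht : 0 < t) : Xs := ⟨fpt t, fpt_mem ht⟩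
def xg (t : ℝ) (ht : 0 < t) : Xs := ⟨gpt t, gpt_mem ht⟩

lemma FG_disj {p : Epl} (hF : p ∈ Fs) (hG : p ∈ Gs) : False := by
  obtain ⟨t, ht, rfl⟩ := hF
  obtain ⟨u, hu, h⟩ := hG
  have h1 : (1:ℝ) + 1/t = -1 - 1/u := congrArg (fun p : Epl => p 1) h
  have : 0 < 1/t := by positivity
  have : 0 < 1/u := by positivity
  linarith

lemma chain_f {s t : ℝ} (hs : 0 < s) (ht : 0 < t) :
    ∀ n : ℕ, ∀ u : ℝ, ∀ hu : 0 < u, t ≤ u → u ≤ t + n * (s/(2*(1+1/t^2))) →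
      Relation.EqvGen (fun a b : Xs => dist a b < s) (xf t ht) (xf u hu) := by
  set δ := s/(2*(1+1/t^2)) with hδ
  have hδ0 : 0 < δ := by positivity
  have hδs : δ * (1+1/t^2) = s/2 := by rw [hδ]; field_simp
  intro n
  induction n with
  | zero =>
    intro u hu h1 h2
    simp only [Nat.cast_zero, zero_mul, add_zero] at h2
    have : u = t := le_antisymm h2 h1
    subst this
    exact Relation.EqvGen.refl _
  | succ n ih =>
    intro u hu h1 h2
    by_cases hc : u ≤ t + n * δ
    · exact ih u hu h1 hc
    · push_neg at hc
      have hnn : (0:ℝ) ≤ n * δ := by positivity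
      set v := max t (u - δ) with hv
      have htv : t ≤ v := le_max_left _ _
      have hv0 : 0 < v := ht.trans_le htv
      have hvu : v ≤ u := max_le (by linarith) (by linarith)
      have huv : u - v ≤ δ := by
        have := le_max_right t (u - δ)
        have : u - δ ≤ v := this
        linarith
      have hvn : v ≤ t + n * δ := by
        apply max_le (by linarith)
        push_cast at h2 ⊢
        linarith
      have step : dist (xf v hv0) (xf u hu) < s := by
        have hd : dist (xf v hv0) (xf u hu) = dist (fpt v) (fpt u) := Subtype.dist_eq _ _
        rw [hd]
        have hb := fstep ht htv hvu
        have h3 : (u - v)*(1+1/t^2) ≤ δ*(1+1/t^2) := by nlinarith [sq_nonneg (1/t)]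
        have : (0:ℝ) < 1+1/t^2 := by positivity
        nlinarith
      exact Relation.EqvGen.trans _ _ _ (ih v hv0 htv hvn)
        (Relation.EqvGen.rel _ _ step)

lemma chain_g {s t : ℝ} (hs : 0 < s) (ht : 0 < t) :
    ∀ n : ℕ, ∀ u : ℝ, ∀ hu : 0 < u, t ≤ u → u ≤ t + n * (s/(2*(1+1/t^2))) →
      Relation.EqvGen (fun a b : Xs => dist a b < s) (xg t ht) (xg u hu) := by
  set δ := s/(2*(1+1/t^2)) with hδ
  have hδ0 : 0 < δ := by positivity
  have hδs : δ * (1+1/t^2) = s/2 := by rw [hδ]; field_simp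
  intro n
  induction n with
  | zero =>
    intro u hu h1 h2
    simp only [Nat.cast_zero, zero_mul, add_zero] at h2
    have : u = t := le_antisymm h2 h1
    subst this
    exact Relation.EqvGen.refl _
  | succ n ih =>
    intro u hu h1 h2
    by_cases hc : u ≤ t + n * δ
    · exact ih u hu h1 hc
    · push_neg at hc
      have hnn : (0:ℝ) ≤ n * δ := by positivity
      set v := max t (u - δ) with hv
      have htv : t ≤ v := le_max_left _ _
      have hv0 : 0 < v := ht.trans_le htv
      have hvu : v ≤ u := max_le (by linarith) (by linarith)
      have huv : u - v ≤ δ := by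
        have : u - δ ≤ v := le_max_right t (u - δ)
        linarith
      have hvn : v ≤ t + n * δ := by
        apply max_le (by linarith)
        push_cast at h2 ⊢
        linarith
      have step : dist (xg v hv0) (xg u hu) < s := by
        have hd : dist (xg v hv0) (xg u hu) = dist (gpt v) (gpt u) := Subtype.dist_eq _ _
        rw [hd]
        have hb := gstep ht htv hvu
        have h3 : (u - v)*(1+1/t^2) ≤ δ*(1+1/t^2) := by nlinarith [sq_nonneg (1/t)]
        have : (0:ℝ) < 1+1/t^2 := by positivity
        nlinarith
      exact Relation.EqvGen.trans _ _ _ (ih v hv0 htv hvn)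
        (Relation.EqvGen.rel _ _ step)

lemma chain_f' {s t u : ℝ} (hs : 0 < s) (ht : 0 < t) (hu : 0 < u) (htu : t ≤ u) :
    Relation.EqvGen (fun a b : Xs => dist a b < s) (xf t ht) (xf u hu) := by
  set δ := s/(2*(1+1/t^2)) with hδ
  have hδ0 : 0 < δ := by positivity
  obtain ⟨n, hn⟩ := exists_nat_ge ((u - t)/δ)
  exact chain_f hs ht n u hu htu (by rw [div_le_iff₀ hδ0] at hn; linarith)

lemma chain_g' {s t u : ℝ} (hs : 0 < s) (ht : 0 < t) (hu : 0 < u) (htu : t ≤ u) :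
    Relation.EqvGen (fun a b : Xs => dist a b < s) (xg t ht) (xg u hu) := by
  set δ := s/(2*(1+1/t^2)) with hδ
  have hδ0 : 0 < δ := by positivity
  obtain ⟨n, hn⟩ := exists_nat_ge ((u - t)/δ)
  exact chain_g hs ht n u hu htu (by rw [div_le_iff₀ hδ0] at hn; linarith)

lemma hub {s T : ℝ} (hs : 0 < s) (hT : 0 < T) (hTs : dist (fpt T) (gpt T) < s) :
    ∀ p : Xs, Relation.EqvGen (fun a b : Xs => dist a b < s) p (xf T hT) := by
  rintro ⟨p, hpF | hpG⟩
  · obtain ⟨t, ht, rfl⟩ := hpF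
    have hp : (⟨!₂[t, 1+1/t], Or.inl ⟨t, ht, rfl⟩⟩ : Xs) = xf t ht := rfl
    rw [hp]
    have hu1 : (0:ℝ) < max t T := lt_max_of_lt_left ht
    exact Relation.EqvGen.trans _ _ _
      (chain_f' hs ht hu1 (le_max_left _ _))
      (Relation.EqvGen.symm _ _ (chain_f' hs hT hu1 (le_max_right _ _)))
  · obtain ⟨t, ht, rfl⟩ := hpG
    have hp : (⟨!₂[t, -1-1/t], Or.inr ⟨t, ht, rfl⟩⟩ : Xs) = xg t ht := rfl
    rw [hp]
    have hu1 : (0:ℝ) < max t T := lt_max_of_lt_left ht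
    refine Relation.EqvGen.trans _ _ _ (Relation.EqvGen.trans _ _ _
      (chain_g' hs ht hu1 (le_max_left _ _))
      (Relation.EqvGen.symm _ _ (chain_g' hs hT hu1 (le_max_right _ _)))) ?_
    refine Relation.EqvGen.rel _ _ ?_
    have hd : dist (xg T hT) (xf T hT) = dist (gpt T) (fpt T) := Subtype.dist_eq _ _
    rw [hd, dist_comm]
    exact hTs

lemma connected {s : ℝ} (hs2 : 2 < s) (p q : Xs) :
    Relation.EqvGen (fun a b : Xs => dist a b < s) p q := by
  have hs : 0 < s := by linarith
  set T : ℝ := 2/(s-2) + 1 with hTdef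
  have hT : 0 < T := by
    rw [hTdef]
    have := div_pos (by norm_num : (0:ℝ) < 2) (by linarith : (0:ℝ) < s-2)
    linarith
  have hTs : dist (fpt T) (gpt T) < s := by
    rw [vert_dist hT]
    have h1 : 2/(s-2) < T := by rw [hTdef]; linarith
    have h2 : 2/T < s - 2 := by
      rw [div_lt_iff₀ hT]
      rw [div_lt_iff₀ (by linarith : (0:ℝ) < s-2)] at h1
      linarith
    linarith
  exact Relation.EqvGen.trans _ _ _ (hub hs hT hTs p)
    (Relation.EqvGen.symm _ _ (hub hs hT hTs q))

lemma separated {s : ℝ} (hs2 : s ≤ 2) {p q : Xs}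
    (h : Relation.EqvGen (fun a b : Xs => dist a b < s) p q) :
    ((p : Epl) ∈ Fs ↔ (q : Epl) ∈ Fs) := by
  induction h with
  | rel a b hab =>
    have hd : dist a b = dist (a : Epl) b := Subtype.dist_eq _ _
    constructor
    · intro haF
      rcases b.2 with hbF | hbG
      · exact hbF
      · exfalso
        obtain ⟨t, ht, ha⟩ := haF
        obtain ⟨u, hu, hb⟩ := hbG
        have : 2 < dist (a : Epl) b := by rw [ha, hb]; exact cross_gt ht hu
        linarith [hab, hd ▸ hab]
    · intro hbF
      rcases a.2 with haF | haG
      · exact haF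
      · exfalso
        obtain ⟨t, ht, hb⟩ := hbF
        obtain ⟨u, hu, ha⟩ := haG
        have : 2 < dist (b : Epl) a := by rw [ha, hb]; exact cross_gt ht hu
        rw [← dist_comm (a : Epl) b] at this
        linarith [hd ▸ hab]
  | refl a => exact Iff.rfl
  | symm a b _ ih => exact ih.symm
  | trans a b c _ _ ih1 ih2 => exact ih1.trans ih2

lemma part3 : ∀ p ∈ Fs, ∀ q ∈ Gs, 2 < dist p q := by
  rintro p ⟨t, ht, rfl⟩ q ⟨u, hu, rfl⟩
  exact cross_gt ht hu

lemma part2 : sInf {d : ℝ | ∃ p ∈ Fs, ∃ q ∈ Gs, dist p q = d} = 2 := by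
  have hlb : ∀ d ∈ {d : ℝ | ∃ p ∈ Fs, ∃ q ∈ Gs, dist p q = d}, 2 ≤ d := by
    rintro d ⟨p, hp, q, hq, rfl⟩
    exact (part3 p hp q hq).le
  apply le_antisymm
  · apply le_of_forall_pos_le_add
    intro ε hε
    set t := max 1 (2/ε) with htd
    have ht : (0:ℝ) < t := lt_of_lt_of_le one_pos (le_max_left _ _)
    have hmem : (2 + 2/t) ∈ {d : ℝ | ∃ p ∈ Fs, ∃ q ∈ Gs, dist p q = d} :=
      ⟨fpt t, ⟨t, ht, rfl⟩, gpt t, ⟨t, ht, rfl⟩, vert_dist ht⟩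
    have h1 := csInf_le ⟨2, hlb⟩ hmem
    have h2 : 2/t ≤ ε := by
      rw [div_le_iff₀ ht]
      have h3 : 2/ε ≤ t := le_max_right _ _
      rw [div_le_iff₀ hε] at h3
      linarith
    linarith
  · exact le_csInf ⟨dist (fpt 1) (gpt 1), fpt 1, ⟨1, one_pos, rfl⟩, gpt 1, ⟨1, one_pos, rfl⟩, rfl⟩ hlb

lemma part1 (m : ℝ) (hm : 0 < m) : ¬ IsLocMinVal (↥Xs) m := by
  rintro ⟨a, b, hab, ε, hε, hmin⟩
  obtain ⟨t, ht, hA⟩ | ⟨t, ht, hA⟩ := a.2 <;> obtain ⟨u, hu, hB⟩ | ⟨u, hu, hB⟩ := b.2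
  · -- F F
    have hd : dist a b = dist (fpt t) (fpt u) := by rw [Subtype.dist_eq, hA, hB]; rfl
    have hne : t ≠ u := by
      rintro rfl
      have : dist a b = 0 := by rw [hd, dist_self]
      linarith [hab ▸ this]
    rcases lt_or_gt_of_ne hne with hlt | hlt
    · obtain ⟨t', h1, h2, h3, h4⟩ := move_f ht hlt hε
      have ht' : 0 < t' := ht.trans h1
      have key := hmin (xf t' ht') b (by rw [Subtype.dist_eq, hA]; exact h3)
        (by rw [dist_self]; exact hε)
      have h5 : dist (xf t' ht') b = dist (fpt t') (fpt u) := by rw [Subtype.dist_eq, hB]; rfl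
      rw [hd, h5] at key
      linarith
    · obtain ⟨u', h1, h2, h3, h4⟩ := move_f hu hlt hε
      have hu' : 0 < u' := hu.trans h1
      have key := hmin a (xf u' hu') (by rw [dist_self]; exact hε)
        (by rw [Subtype.dist_eq, hB]; exact h3)
      have h5 : dist a (xf u' hu') = dist (fpt t) (fpt u') := by rw [Subtype.dist_eq, hA]; rfl
      rw [hd, h5] at key
      rw [dist_comm (fpt u') (fpt t), dist_comm (fpt u) (fpt t)] at h4
      linarith
  · -- F G
    have hd : dist a b = dist (fpt t) (gpt u) := by rw [Subtype.dist_eq, hA, hB]; rfl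
    obtain ⟨h, h0, h1, h2, h3⟩ := move_fg ht hu hε
    have hth : 0 < t + h := by linarith
    have huh : 0 < u + h := by linarith
    have key := hmin (xf (t+h) hth) (xg (u+h) huh)
      (by rw [Subtype.dist_eq, hA]; exact h1)
      (by rw [Subtype.dist_eq, hB]; exact h2)
    have h5 : dist (xf (t+h) hth) (xg (u+h) huh) = dist (fpt (t+h)) (gpt (u+h)) :=
      Subtype.dist_eq _ _
    rw [hd, h5] at key
    linarith
  · -- G F
    have hd : dist a b = dist (fpt u) (gpt t) := by
      rw [Subtype.dist_eq, hA, hB, dist_comm]; rfl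
    obtain ⟨h, h0, h1, h2, h3⟩ := move_fg hu ht hε
    have hth : 0 < t + h := by linarith
    have huh : 0 < u + h := by linarith
    have key := hmin (xg (t+h) hth) (xf (u+h) huh)
      (by rw [Subtype.dist_eq, hA]; exact h2)
      (by rw [Subtype.dist_eq, hB]; exact h1)
    have h5 : dist (xg (t+h) hth) (xf (u+h) huh) = dist (fpt (u+h)) (gpt (t+h)) :=
      (Subtype.dist_eq _ _).trans (dist_comm _ _)
    rw [hd, h5] at key
    linarith
  · -- G G
    have hd : dist a b = dist (gpt t) (gpt u) := by rw [Subtype.dist_eq, hA, hB]; rfl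
    have hne : t ≠ u := by
      rintro rfl
      have : dist a b = 0 := by rw [hd, dist_self]
      linarith [hab ▸ this]
    rcases lt_or_gt_of_ne hne with hlt | hlt
    · obtain ⟨t', h1, h2, h3, h4⟩ := move_g ht hlt hε
      have ht' : 0 < t' := ht.trans h1
      have key := hmin (xg t' ht') b (by rw [Subtype.dist_eq, hA]; exact h3)
        (by rw [dist_self]; exact hε)
      have h5 : dist (xg t' ht') b = dist (gpt t') (gpt u) := by rw [Subtype.dist_eq, hB]; rfl
      rw [hd, h5] at key
      linarith
    · obtain ⟨u', h1, h2, h3, h4⟩ := move_g hu hlt hε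
      have hu' : 0 < u' := hu.trans h1
      have key := hmin a (xg u' hu') (by rw [dist_self]; exact hε)
        (by rw [Subtype.dist_eq, hB]; exact h3)
      have h5 : dist a (xg u' hu') = dist (gpt t) (gpt u') := by rw [Subtype.dist_eq, hA]; rfl
      rw [hd, h5] at key
      rw [dist_comm (gpt u') (gpt t), dist_comm (gpt u) (gpt t)] at h4
      linarith


theorem stmt_17 :
    ∀ F Gr : Set (EuclideanSpace ℝ (Fin 2)),
      F = {p | ∃ t : ℝ, 0 < t ∧ p = !₂[t, 1 + 1 / t]} →
      Gr = {p | ∃ t : ℝ, 0 < t ∧ p = !₂[t, -1 - 1 / t]} →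
      (∀ m : ℝ, 0 < m → ¬ IsLocMinVal (↥(F ∪ Gr)) m) ∧
      sInf {d : ℝ | ∃ p ∈ F, ∃ q ∈ Gr, dist p q = d} = 2 ∧
      (∀ p ∈ F, ∀ q ∈ Gr, 2 < dist p q) ∧
      (∀ s : ℝ, 0 < s → s ≤ 2 → ∀ p q : ↥(F ∪ Gr), (p : EuclideanSpace ℝ (Fin 2)) ∈ F →
        (q : EuclideanSpace ℝ (Fin 2)) ∈ Gr →
        ¬ Relation.EqvGen (fun a b : ↥(F ∪ Gr) => dist a b < s) p q) ∧
      (∀ s : ℝ, 2 < s → ∀ p q : ↥(F ∪ Gr),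
        Relation.EqvGen (fun a b : ↥(F ∪ Gr) => dist a b < s) p q) := by
  intro F Gr hF hGr
  subst hF; subst hGr
  refine ⟨fun m hm => part1 m hm, part2, part3, ?_, ?_⟩
  · intro s hs0 hs2 p q hp hq hrel
    exact FG_disj ((separated hs2 hrel).mp hp) hq
  · intro s hs p q
    exact connected hs p q
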